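/- Let l be a finite distributive lattice (with its induced complete-lattice structure), m ∈ l a sup-irreducible element, and φ : Set AP → l. Then the m-cut of the dual-persistence property dpers(φ) equals the classical dual-persistence property of the m-cut of φ: {σ : ℕ → Set AP | m ≤ dpers(φ)(σ)} = {σ | ∀ i : ℕ, ∃ j ≥ i, m ≤ φ(σ j)}. -/

import Mathlib

/-- The dual-persistence property `dpers(φ)(σ) = ⨅ i, ⨆ j ≥ i, φ(σ j)`. -/
def mvDpers {AP l : Type*} [CompleteLattice l] (φ : Set AP → l) (σ : ℕ → Set AP) : l :=
  ⨅ i : ℕ, ⨆ j ≥ i, φ (σ j)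

/-- Sup-irreducible elements are sup-prime under binary distributivity. -/
lemma supPrime_of_supIrred {l : Type*} [CompleteLattice l]
    (hd : ∀ x y z : l, x ⊓ (y ⊔ z) = (x ⊓ y) ⊔ (x ⊓ z))
    {m : l} (hm : SupIrred m) {a b : l} (h : m ≤ a ⊔ b) : m ≤ a ∨ m ≤ b := by
  have : (m ⊓ a) ⊔ (m ⊓ b) = m := by rw [← hd]; exact inf_eq_left.2 h
  rcases hm.2 this with h' | h'
  · exact Or.inl (by rw [← h']; exact inf_le_right)
  · exact Or.inr (by rw [← h']; exact inf_le_right)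

lemma supIrred_le_finset_sup {l : Type*} [CompleteLattice l]
    (hd : ∀ x y z : l, x ⊓ (y ⊔ z) = (x ⊓ y) ⊔ (x ⊓ z))
    {m : l} (hm : SupIrred m) (s : Finset l) (h : m ≤ s.sup id) :
    ∃ a ∈ s, m ≤ a := by
  classical
  induction s using Finset.induction with
  | empty =>
    simp only [Finset.sup_empty, le_bot_iff] at h
    exact absurd (h ▸ isMin_bot) hm.1
  | insert a s hx ih =>
    rw [Finset.sup_insert] at h
    rcases supPrime_of_supIrred hd hm h with h' | h'
    · exact ⟨_, Finset.mem_insert_self _ _, h'⟩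
    · obtain ⟨a, ha, hma⟩ := ih h'
      exact ⟨a, Finset.mem_insert_of_mem ha, hma⟩

theorem stmt9 {AP l : Type*} [CompleteLattice l] [Fintype l]
    (hd : ∀ x y z : l, x ⊓ (y ⊔ z) = (x ⊓ y) ⊔ (x ⊓ z))
    {m : l} (hm : SupIrred m) (φ : Set AP → l) :
    {σ : ℕ → Set AP | m ≤ mvDpers φ σ} =
      {σ : ℕ → Set AP | ∀ i : ℕ, ∃ j ≥ i, m ≤ φ (σ j)} := by
  ext σ
  simp only [Set.mem_setOf_eq, mvDpers, le_iInf_iff]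
  constructor
  · intro h i
    have h' : m ≤ sSup ((fun j => φ (σ j)) '' {j | i ≤ j}) := by
      rw [sSup_image]
      exact h i
    have hfin : ((fun j => φ (σ j)) '' {j | i ≤ j}).Finite := Set.toFinite _
    have h'' : m ≤ hfin.toFinset.sup id := by
      rwa [Finset.sup_id_eq_sSup, hfin.coe_toFinset]
    obtain ⟨a, ha, hma⟩ := supIrred_le_finset_sup hd hm _ h''
    rw [Set.Finite.mem_toFinset] at ha
    obtain ⟨j, hj, rfl⟩ := ha
    exact ⟨j, hj, hma⟩
  · intro h i
    obtain ⟨j, hj, hmj⟩ := h i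
    exact le_trans hmj (le_iSup_of_le j (le_iSup_of_le hj le_rfl))
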